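/- Let z ∈ ℂ. If there exists a nonnegative integer k such that |q_{F_k}(z)| > 1 and |q_{F_{k+1}}(z)| > 1, then the sequence (q_{F_n}(z))_{n≥0} is unbounded. -/
import Mathlib


/-- `rr p n = r_n = p (⌊(n+1)/2⌋ + 1)`. -/
noncomputable def rr (p : ℕ → ℝ) (n : ℕ) : ℝ := p ((n+1)/2 + 1)

/-- `qF p z n = q_{F_n}(z)`. -/
noncomputable def qF (p : ℕ → ℝ) (z : ℂ) : ℕ → ℂ
  | 0 => (z - (1 - (p 1 : ℂ))) / (p 1 : ℂ)
  | 1 => (1 / (p 2 : ℂ)) * (qF p z 0) ^ 2 - (1 / (p 2 : ℂ) - 1)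
  | (n+2) => (1 / (rr p (n+2) : ℂ)) * qF p z (n+1) * qF p z n - (1 / (rr p (n+2) : ℂ) - 1)

lemma key_step (p : ℕ → ℝ) (hp : ∀ i, 1 ≤ i → 0 < p i ∧ p i ≤ 1) (z : ℂ) (n : ℕ)
    (hA : 1 ≤ ‖qF p z (n+1)‖) (hB : 1 ≤ ‖qF p z n‖) :
    ‖qF p z (n+1)‖ * ‖qF p z n‖ ≤ ‖qF p z (n+2)‖ := by
  have hr := hp ((n+3)/2 + 1) (by omega)
  set r : ℝ := rr p (n+2) with hrdef
  have hr' : 0 < r ∧ r ≤ 1 := hr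
  obtain ⟨hr0, hr1⟩ := hr'
  have h1r : 1 ≤ 1 / r := one_le_one_div hr0 hr1
  set a := qF p z (n+1)
  set b := qF p z n
  have hq : qF p z (n+2) = (1 / (r:ℂ)) * a * b - ((1 / (r:ℂ)) - 1) := rfl
  have hc1 : (1 / (r:ℂ)) = ((1/r : ℝ) : ℂ) := by push_cast; ring
  have hc2 : (1 / (r:ℂ)) - 1 = ((1/r - 1 : ℝ) : ℂ) := by push_cast; ring
  have hn1 : ‖(1 / (r:ℂ)) * a * b‖ = (1/r) * ‖a‖ * ‖b‖ := by
    rw [norm_mul, norm_mul, hc1, Complex.norm_real, Real.norm_eq_abs, abs_of_pos (by positivity)]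
  have hn2 : ‖(1 / (r:ℂ)) - 1‖ = 1/r - 1 := by
    rw [hc2, Complex.norm_real, Real.norm_eq_abs, abs_of_nonneg (by linarith)]
  have hlb : ‖(1 / (r:ℂ)) * a * b‖ - ‖(1 / (r:ℂ)) - 1‖ ≤ ‖qF p z (n+2)‖ := by
    rw [hq]; exact norm_sub_norm_le _ _
  rw [hn1, hn2] at hlb
  nlinarith [mul_le_mul hA hB (by linarith) (by linarith)]

lemma growth (p : ℕ → ℝ) (hp : ∀ i, 1 ≤ i → 0 < p i ∧ p i ≤ 1)
    (z : ℂ) (k : ℕ) (c : ℝ) (hc : 1 ≤ c)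
    (h1 : c ≤ ‖qF p z k‖) (h2 : c ≤ ‖qF p z (k+1)‖) :
    ∀ n : ℕ, c ≤ ‖qF p z (k+n)‖ ∧ c ^ (n+1) ≤ ‖qF p z (k+n+1)‖ := by
  intro n
  induction n with
  | zero => simpa using ⟨h1, h2⟩
  | succ m ih =>
    obtain ⟨hA, hB⟩ := ih
    have hc1 : c ≤ c ^ (m+1) := by
      calc c = c ^ 1 := (pow_one c).symm
        _ ≤ c ^ (m+1) := pow_le_pow_right₀ hc (by omega)
    have hB' : c ≤ ‖qF p z (k+m+1)‖ := le_trans hc1 hB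
    refine ⟨hB', ?_⟩
    have hkey := key_step p hp z (k+m) (le_trans hc hB') (le_trans hc hA)
    have : c ^ (m+2) = c ^ (m+1) * c := by ring
    have hfin : c ^ (m+1) * c ≤ ‖qF p z (k+m+1)‖ * ‖qF p z (k+m)‖ :=
      mul_le_mul hB hA (by linarith) (by positivity)
    have heq : k + (m+1) + 1 = k + m + 2 := by omega
    rw [heq, this]
    exact le_trans hfin hkey

/-- If `|q_{F_k}(z)| > 1` and `|q_{F_{k+1}}(z)| > 1` for some `k ≥ 0`,
then the sequence `(q_{F_n}(z))_{n ≥ 0}` is unbounded. -/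
theorem stmt12 (p : ℕ → ℝ) (hp : ∀ i, 1 ≤ i → 0 < p i ∧ p i ≤ 1)
    (z : ℂ) (k : ℕ) (h1 : 1 < ‖qF p z k‖) (h2 : 1 < ‖qF p z (k+1)‖) :
    ¬ ∃ C : ℝ, ∀ n : ℕ, ‖qF p z n‖ ≤ C := by
  rintro ⟨C, hC⟩
  set c : ℝ := min ‖qF p z k‖ ‖qF p z (k+1)‖ with hcdef
  have hc1 : 1 < c := lt_min h1 h2
  have hg := growth p hp z k c hc1.le (min_le_left _ _) (min_le_right _ _)
  obtain ⟨N, hN⟩ := pow_unbounded_of_one_lt C hc1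
  have := (hg N).2
  have := hC (k + N + 1)
  have hmono : c ^ N ≤ c ^ (N+1) := pow_le_pow_right₀ hc1.le (by omega)
  linarith
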